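/- Let T = (L, l_init, D, κ, ℓ) be a finite TS and φ = ∃π₁...∃πₙ.∀πₙ₊₁...∀πₙ₊ₘ. ψ an ∃*∀* HyperLTL formula whose body ψ is tracked by a DFA A_ψ with sink accepting states. If the conformant planning problem P_{T,φ} (whose states are (n+m)-tuples of locations paired with a DFA state, whose actions are n-tuples of directions updating the first n locations deterministically and the last m locations non-deterministically over all directions, with the DFA state updated deterministically, initial state (l_init,...,l_init,q₀), and goal states those whose DFA component is accepting) admits a conformant plan, then T ⊨ φ. -/

import Mathlib

open scoped Classical

/-- An action of a non-deterministic planning problem. -/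
structure PAct (S : Type*) where
  pre : Set S
  eff : S → Set S

/-- Belief-state execution semantics of a plan: `none` means undefined. -/
noncomputable def exec {S : Type*} (T : Set S) : List (PAct S) → Option (Set S)
  | [] => some T
  | a :: σ => if T ⊆ a.pre then exec (⋃ s ∈ T, a.eff s) σ else none

/-- A plan is conformant if its execution from the initial state is defined and
ends inside the goal set. -/
def Conformant {S : Type*} (s₀ : S) (G : Set S) (σ : List (PAct S)) : Prop :=
  ∃ R : Set S, exec {s₀} σ = some R ∧ R ⊆ G

/-- A path in a transition system with directions. -/
def IsPath {L D : Type*} (linit : L) (κ : L → D → L) (p : ℕ → L) : Prop :=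
  p 0 = linit ∧ ∀ i, ∃ d : D, p (i + 1) = κ (p i) d

/-- The run of a deterministic automaton on an infinite word. -/
def run {Q A : Type*} (q₀ : Q) (δ : Q → A → Q) (u : ℕ → A) : ℕ → Q
  | 0 => q₀
  | n + 1 => δ (run q₀ δ u n) (u n)

/-- The letter (over `AP × Fin nm`) obtained from a tuple of locations via the labeling. -/
def letterOf {L AP : Type*} (nm : ℕ) (ℓ : L → Set AP) (ls : Fin nm → L) :
    Set (AP × Fin nm) :=
  {x | x.1 ∈ ℓ (ls x.2)}

/-- The action of the product planning problem `P_{T,φ}` associated with an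
`n`-tuple of directions: the first `n` locations are updated deterministically,
the last `m` locations non-deterministically over all directions, and the DFA
state is updated deterministically from the current letter. -/
def prodAct {L D AP Q : Type*} (n m : ℕ) (κ : L → D → L) (ℓ : L → Set AP)
    (δ : Q → Set (AP × Fin (n + m)) → Q) (dv : Fin n → D) :
    PAct ((Fin (n + m) → L) × Q) where
  pre := Set.univ
  eff := fun st =>
    { st' | ∃ du : Fin m → D,
        st' = (fun i => κ (st.1 i) (Fin.append dv du i),
               δ st.2 (letterOf (n + m) ℓ st.1)) }

/-- `T ⊨ ∃π₁…∃πₙ.∀πₙ₊₁…∀πₙ₊ₘ. ψ`, where `Sat` is the semantics of the body `ψ`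
on infinite words over `2^{AP × {π₁,…,πₙ₊ₘ}}`. -/
def ModelsEA {L D AP : Type*} (n m : ℕ) (linit : L) (κ : L → D → L) (ℓ : L → Set AP)
    (Sat : (ℕ → Set (AP × Fin (n + m))) → Prop) : Prop :=
  ∃ pe : Fin n → ℕ → L, (∀ i, IsPath linit κ (pe i)) ∧
    ∀ pu : Fin m → ℕ → L, (∀ j, IsPath linit κ (pu j)) →
      Sat (fun i => letterOf (n + m) ℓ (fun v => Fin.append pe pu v i))

lemma exec_mem {S : Type*} : ∀ (σ : List (PAct S)) (T R : Set S) (f : ℕ → S),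
    exec T σ = some R → f 0 ∈ T →
    (∀ k (hk : k < σ.length), f (k + 1) ∈ (σ.get ⟨k, hk⟩).eff (f k)) →
    f σ.length ∈ R
  | [], T, R, f, hex, h0, _ => by
      simp only [exec, Option.some.injEq] at hex
      subst hex; exact h0
  | a :: σ, T, R, f, hex, h0, htr => by
      by_cases hp : T ⊆ a.pre
      · simp only [exec, if_pos hp] at hex
        have := exec_mem σ (⋃ s ∈ T, a.eff s) R (fun k => f (k + 1)) hex
          (Set.mem_biUnion h0 (htr 0 (by simp)))
          (fun k hk => htr (k + 1) (by simpa using Nat.succ_lt_succ hk))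
        simpa using this
      · simp [exec, if_neg hp] at hex

/-- Soundness of the product planning encoding: if the conformant planning
problem `P_{T,φ}` admits a conformant plan, then `T ⊨ φ`. -/
theorem stmt6 {L D AP Q : Type*} [Fintype L] [Fintype D] [Fintype Q] [Nonempty D]
    (n m : ℕ) (linit : L) (κ : L → D → L) (ℓ : L → Set AP)
    (q₀ : Q) (δ : Q → Set (AP × Fin (n + m)) → Q) (F : Set Q)
    (hSink : ∀ q ∈ F, ∀ σ : Set (AP × Fin (n + m)), δ q σ ∈ F)
    (Sat : (ℕ → Set (AP × Fin (n + m))) → Prop)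
    (hAcc : ∀ u : ℕ → Set (AP × Fin (n + m)), (∃ i, run q₀ δ u i ∈ F) ↔ Sat u)
    (hplan : ∃ plan : List (Fin n → D),
        Conformant ((fun _ => linit, q₀) : (Fin (n + m) → L) × Q)
          {st | st.2 ∈ F} (plan.map (prodAct n m κ ℓ δ))) :
    ModelsEA n m linit κ ℓ Sat := by
  obtain ⟨plan, R, hex, hRG⟩ := hplan
  have dD : D := Classical.arbitrary D
  set dE : ℕ → Fin n → D :=
    fun k => if h : k < plan.length then plan.get ⟨k, h⟩ else fun _ => dD with hdE
  set pe : Fin n → ℕ → L :=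
    fun i k => Nat.rec linit (fun k l => κ l (dE k i)) k with hpe
  refine ⟨pe, fun i => ⟨rfl, fun k => ⟨dE k i, rfl⟩⟩, ?_⟩
  intro pu hpu
  choose du hdu using fun j => (hpu j).2
  set u : ℕ → Set (AP × Fin (n + m)) :=
    fun i => letterOf (n + m) ℓ (fun v => Fin.append pe pu v i) with hu
  rw [← hAcc]
  refine ⟨plan.length, ?_⟩
  set f : ℕ → (Fin (n + m) → L) × Q :=
    fun k => (fun v => Fin.append pe pu v k, run q₀ δ u k) with hf
  have key := exec_mem (plan.map (prodAct n m κ ℓ δ))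
      {((fun _ => linit, q₀) : (Fin (n + m) → L) × Q)} R f hex ?_ ?_
  · rw [List.length_map] at key
    exact hRG key
  · -- f 0 is the initial state
    have : f 0 = ((fun _ => linit, q₀) : (Fin (n + m) → L) × Q) := by
      apply Prod.ext
      · funext v
        refine Fin.addCases (fun i => ?_) (fun j => ?_) v
        · simp [hf, Fin.append_left, hpe]
        · simp [hf, Fin.append_right, (hpu j).1]
      · rfl
    rw [this]; exact rfl
  · intro k hk
    have hk' : k < plan.length := by simpa using hk
    have hget : (plan.map (prodAct n m κ ℓ δ)).get ⟨k, hk⟩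
        = prodAct n m κ ℓ δ (dE k) := by
      simp [List.getElem_map, hdE, hk']
    rw [hget]
    refine ⟨fun j => du j k, ?_⟩
    apply Prod.ext
    · funext v
      refine Fin.addCases (fun i => ?_) (fun j => ?_) v
      · simp [hf, Fin.append_left, hpe]
      · simp [hf, Fin.append_right, hdu j k]
    · rfl
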